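/- Let X be an n×d real matrix with 𝕏 = XᵀX, and let D be a random n×n diagonal matrix with ‖D‖ ≤ τ almost surely, M₂ = E[D²] non-singular, and 𝕏̂ = XᵀM₂X. Suppose α > 0 satisfies ατ²·‖𝕏‖ < 2. Then sup over unit vectors w orthogonal to ker(X) of E[‖(I − α·XᵀD²X)w‖₂²] is at most 1 − α·(2 − ατ²·‖𝕏‖)·σ⁺min(𝕏̂), and this quantity is strictly less than 1. -/

import Mathlib

open Matrix MeasureTheory ProbabilityTheory Filter
open scoped BigOperators

noncomputable section

/-- Euclidean norm of a vector in `Fin n → ℝ`. -/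
def l2norm {n : ℕ} (v : Fin n → ℝ) : ℝ := Real.sqrt (∑ i, (v i) ^ 2)

/-- Spectral norm (ℓ²-operator norm) of a real matrix. -/
def specNorm {m n : ℕ} (A : Matrix (Fin m) (Fin n) ℝ) : ℝ :=
  sSup {c : ℝ | ∃ v : Fin n → ℝ, l2norm v = 1 ∧ c = l2norm (A *ᵥ v)}

/-- The smallest non-zero singular value of a real matrix:
the infimum of all positive `s` such that `s ^ 2` is an eigenvalue of `AᵀA`. -/
def sigmaMinPos {m n : ℕ} (A : Matrix (Fin m) (Fin n) ℝ) : ℝ :=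
  sInf {s : ℝ | 0 < s ∧ ∃ v : Fin n → ℝ, v ≠ 0 ∧ (Aᵀ * A) *ᵥ v = (s ^ 2) • v}

/-- `B` is the Moore–Penrose pseudo-inverse of `A` (the four Penrose conditions). -/
def IsMoorePenrose {m n : ℕ} (A : Matrix (Fin m) (Fin n) ℝ)
    (B : Matrix (Fin n) (Fin m) ℝ) : Prop :=
  A * B * A = A ∧ B * A * B = B ∧ (A * B)ᵀ = A * B ∧ (B * A)ᵀ = B * A

/-- `w` lies in the orthogonal complement of `ker A`. -/
def perpKer {m n : ℕ} (A : Matrix (Fin m) (Fin n) ℝ) (w : Fin n → ℝ) : Prop :=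
  ∀ v : Fin n → ℝ, A *ᵥ v = 0 → w ⬝ᵥ v = 0

/-- Entrywise expectation of a random matrix. -/
def matExp {Ω : Type*} [MeasurableSpace Ω] (μ : Measure Ω) {m n : ℕ}
    (M : Ω → Matrix (Fin m) (Fin n) ℝ) : Matrix (Fin m) (Fin n) ℝ :=
  Matrix.of fun i j => ∫ ω, M ω i j ∂μ

/-- Entrywise expectation of a random vector. -/
def vecExp {Ω : Type*} [MeasurableSpace Ω] (μ : Measure Ω) {n : ℕ}
    (v : Ω → Fin n → ℝ) : Fin n → ℝ :=
  fun i => ∫ ω, v ω i ∂μ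

section Helpers

lemma l2norm_nonneg {n : ℕ} (v : Fin n → ℝ) : 0 ≤ l2norm v := Real.sqrt_nonneg _

lemma l2norm_sq {n : ℕ} (v : Fin n → ℝ) : l2norm v ^ 2 = ∑ i, (v i) ^ 2 :=
  Real.sq_sqrt (Finset.sum_nonneg fun _ _ => sq_nonneg _)

lemma dot_self_eq {n : ℕ} (v : Fin n → ℝ) : v ⬝ᵥ v = l2norm v ^ 2 := by
  rw [l2norm_sq, dotProduct]; simp [sq]

lemma dot_self_nonneg' {n : ℕ} (v : Fin n → ℝ) : 0 ≤ v ⬝ᵥ v := by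
  rw [dot_self_eq]; exact sq_nonneg _

lemma l2norm_smul {n : ℕ} (c : ℝ) (v : Fin n → ℝ) : l2norm (c • v) = |c| * l2norm v := by
  unfold l2norm
  rw [← Real.sqrt_sq_eq_abs, ← Real.sqrt_mul (sq_nonneg c), Finset.mul_sum]
  congr 1
  refine Finset.sum_congr rfl fun i _ => ?_
  simp [Pi.smul_apply, mul_pow]

lemma dot_le_l2 {n : ℕ} (u v : Fin n → ℝ) : u ⬝ᵥ v ≤ l2norm u * l2norm v := by
  have h := Finset.sum_mul_sq_le_sq_mul_sq Finset.univ u v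
  have h2 : u ⬝ᵥ v ≤ |u ⬝ᵥ v| := le_abs_self _
  refine h2.trans ?_
  rw [← Real.sqrt_sq_eq_abs, ← Real.sqrt_mul_self (mul_nonneg (l2norm_nonneg u) (l2norm_nonneg v))]
  rw [mul_mul_mul_comm]
  refine Real.sqrt_le_sqrt ?_
  rw [← l2norm_sq, ← l2norm_sq] at h
  calc (u ⬝ᵥ v) ^ 2 = (∑ i, u i * v i) ^ 2 := rfl
  _ ≤ l2norm u ^2 * l2norm v ^2 := h
  _ = l2norm u * l2norm u * (l2norm v * l2norm v) := by ring

lemma bddAbove_specSet {m n : ℕ} (A : Matrix (Fin m) (Fin n) ℝ) :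
    BddAbove {c : ℝ | ∃ v : Fin n → ℝ, l2norm v = 1 ∧ c = l2norm (A *ᵥ v)} := by
  refine ⟨Real.sqrt (∑ i, ∑ j, A i j ^ 2), fun c hc => ?_⟩
  obtain ⟨v, hv, rfl⟩ := hc
  unfold l2norm
  refine Real.sqrt_le_sqrt ?_
  have : ∀ i, (A *ᵥ v) i ^ 2 ≤ (∑ j, A i j ^ 2) * (∑ j, v j ^2) := fun i => by
    have h := Finset.sum_mul_sq_le_sq_mul_sq Finset.univ (fun j => A i j) v
    simpa [Matrix.mulVec, dotProduct] using h
  calc ∑ i, (A *ᵥ v) i ^ 2 ≤ ∑ i, (∑ j, A i j ^ 2) * (∑ j, v j ^2) :=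
        Finset.sum_le_sum fun i _ => this i
  _ = ∑ i, ∑ j, A i j ^ 2 := by
      have : (∑ j, v j ^2) = 1 := by
        rw [← l2norm_sq, hv]; norm_num
      simp [this]

lemma le_specNorm_of_unit {m n : ℕ} (A : Matrix (Fin m) (Fin n) ℝ) (v : Fin n → ℝ)
    (hv : l2norm v = 1) : l2norm (A *ᵥ v) ≤ specNorm A :=
  le_csSup (bddAbove_specSet A) ⟨v, hv, rfl⟩

lemma specNorm_nonneg {m n : ℕ} (A : Matrix (Fin m) (Fin n) ℝ) (v : Fin n → ℝ)
    (hv : l2norm v = 1) : 0 ≤ specNorm A :=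
  (l2norm_nonneg _).trans (le_specNorm_of_unit A v hv)

lemma l2_mulVec_le {m n : ℕ} (A : Matrix (Fin m) (Fin n) ℝ) (v : Fin n → ℝ)
    (hn : ∃ u : Fin n → ℝ, l2norm u = 1) :
    l2norm (A *ᵥ v) ≤ specNorm A * l2norm v := by
  rcases eq_or_ne (l2norm v) 0 with h0 | h0
  · have : v = 0 := by
      have := l2norm_sq v
      rw [h0] at this
      have hz : ∑ i, v i ^ 2 = 0 := by linarith [this]
      funext i
      have := (Finset.sum_eq_zero_iff_of_nonneg (fun i _ => sq_nonneg (v i))).1 hz i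
        (Finset.mem_univ i)
      exact pow_eq_zero_iff (by norm_num) |>.1 this
    simp [this, h0, Matrix.mulVec_zero, l2norm, Real.sqrt_zero]
  · have hvpos : 0 < l2norm v := lt_of_le_of_ne (l2norm_nonneg v) (Ne.symm h0)
    have hunit : l2norm ((l2norm v)⁻¹ • v) = 1 := by
      rw [l2norm_smul, abs_of_pos (inv_pos.2 hvpos), inv_mul_cancel₀ h0]
    have := le_specNorm_of_unit A _ hunit
    rw [Matrix.mulVec_smul, l2norm_smul, abs_of_pos (inv_pos.2 hvpos)] at this
    calc l2norm (A *ᵥ v) = l2norm v * ((l2norm v)⁻¹ * l2norm (A *ᵥ v)) := by field_simp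
    _ ≤ l2norm v * specNorm A := mul_le_mul_of_nonneg_left this (le_of_lt hvpos)
    _ = specNorm A * l2norm v := mul_comm _ _

lemma quadform_le {n : ℕ} (M : Matrix (Fin n) (Fin n) ℝ) (u : Fin n → ℝ)
    (hn : ∃ z : Fin n → ℝ, l2norm z = 1) : u ⬝ᵥ (M *ᵥ u) ≤ specNorm M * (u ⬝ᵥ u) := by
  calc u ⬝ᵥ (M *ᵥ u) ≤ l2norm u * l2norm (M *ᵥ u) := dot_le_l2 _ _
  _ ≤ l2norm u * (specNorm M * l2norm u) :=
      mul_le_mul_of_nonneg_left (l2_mulVec_le M u hn) (l2norm_nonneg u)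
  _ = specNorm M * (u ⬝ᵥ u) := by rw [dot_self_eq]; ring

lemma dot_transpose {n d : ℕ} (X : Matrix (Fin n) (Fin d) ℝ) (v : Fin n → ℝ) (u : Fin d → ℝ) :
    (Xᵀ *ᵥ v) ⬝ᵥ u = v ⬝ᵥ (X *ᵥ u) := by
  rw [Matrix.mulVec_transpose, Matrix.dotProduct_mulVec]

lemma quad_diag {n d : ℕ} (X : Matrix (Fin n) (Fin d) ℝ) (w : Fin d → ℝ) (z : Fin n → ℝ) :
    w ⬝ᵥ ((Xᵀ * Matrix.diagonal z * X) *ᵥ w) = ∑ i, z i * ((X *ᵥ w) i)^2 := by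
  rw [← Matrix.mulVec_mulVec, ← Matrix.mulVec_mulVec, dotProduct_comm, dot_transpose]
  rw [dotProduct_comm, dotProduct]
  refine Finset.sum_congr rfl fun i _ => ?_
  rw [Matrix.mulVec_diagonal]; ring

lemma transpose_mulVec_sq_le {n d : ℕ} (X : Matrix (Fin n) (Fin d) ℝ) (v : Fin n → ℝ)
    (hd : ∃ z : Fin d → ℝ, l2norm z = 1) :
    (Xᵀ *ᵥ v) ⬝ᵥ (Xᵀ *ᵥ v) ≤ specNorm (Xᵀ * X) * (v ⬝ᵥ v) := by
  obtain ⟨z, hz⟩ := hd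
  set u := Xᵀ *ᵥ v with hu
  have h1 : u ⬝ᵥ u = v ⬝ᵥ (X *ᵥ u) := by rw [hu, dot_transpose]
  have h2 : (v ⬝ᵥ (X *ᵥ u)) ^ 2 ≤ (v ⬝ᵥ v) * ((X *ᵥ u) ⬝ᵥ (X *ᵥ u)) := by
    have := Finset.sum_mul_sq_le_sq_mul_sq Finset.univ v (X *ᵥ u)
    simpa [dotProduct, sq] using this
  have h3 : (X *ᵥ u) ⬝ᵥ (X *ᵥ u) = u ⬝ᵥ ((Xᵀ * X) *ᵥ u) := by
    rw [← Matrix.mulVec_mulVec, ← dot_transpose, dotProduct_comm]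
  have h4 : u ⬝ᵥ ((Xᵀ * X) *ᵥ u) ≤ specNorm (Xᵀ * X) * (u ⬝ᵥ u) := quadform_le _ _ ⟨z, hz⟩
  have hS : 0 ≤ specNorm (Xᵀ * X) := specNorm_nonneg _ z hz
  have hvv : 0 ≤ v ⬝ᵥ v := dot_self_nonneg' v
  have huu : 0 ≤ u ⬝ᵥ u := dot_self_nonneg' u
  rcases eq_or_lt_of_le huu with h0 | h0
  · rw [← h0]; positivity
  · have key : (u ⬝ᵥ u)^2 ≤ (v ⬝ᵥ v) * (specNorm (Xᵀ * X) * (u ⬝ᵥ u)) := by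
      calc (u ⬝ᵥ u)^2 = (v ⬝ᵥ (X *ᵥ u))^2 := by rw [h1]
      _ ≤ (v ⬝ᵥ v) * ((X *ᵥ u) ⬝ᵥ (X *ᵥ u)) := h2
      _ = (v ⬝ᵥ v) * (u ⬝ᵥ ((Xᵀ * X) *ᵥ u)) := by rw [h3]
      _ ≤ (v ⬝ᵥ v) * (specNorm (Xᵀ * X) * (u ⬝ᵥ u)) := mul_le_mul_of_nonneg_left h4 hvv
    nlinarith [key, h0]

lemma pointwise_bound {n d : ℕ} (X : Matrix (Fin n) (Fin d) ℝ) (w : Fin d → ℝ)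
    (hw : l2norm w = 1) (τ α : ℝ) (dd : Fin n → ℝ) (hdd : ∀ i, |dd i| ≤ τ) :
    (l2norm (((1 : Matrix (Fin d) (Fin d) ℝ)
        - α • (Xᵀ * Matrix.diagonal (fun i => dd i ^ 2) * X)) *ᵥ w)) ^ 2
      ≤ 1 - α * (2 - α * τ ^ 2 * specNorm (Xᵀ * X)) * (∑ i, dd i ^ 2 * ((X *ᵥ w) i) ^ 2) := by
  set S := specNorm (Xᵀ * X) with hSdef
  set B := Xᵀ * Matrix.diagonal (fun i => dd i ^ 2) * X with hB
  set q := ∑ i, dd i ^ 2 * ((X *ᵥ w) i) ^ 2 with hq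
  have hq0 : 0 ≤ q := Finset.sum_nonneg fun i _ => by positivity
  have hS0 : 0 ≤ S := specNorm_nonneg _ w hw
  have hz : ((1 : Matrix (Fin d) (Fin d) ℝ) - α • B) *ᵥ w = w - α • (B *ᵥ w) := by
    rw [Matrix.sub_mulVec, Matrix.one_mulVec, Matrix.smul_mulVec]
  rw [hz, ← dot_self_eq]
  have expand : (w - α • (B *ᵥ w)) ⬝ᵥ (w - α • (B *ᵥ w))
      = w ⬝ᵥ w - 2*α*(w ⬝ᵥ (B *ᵥ w)) + α^2 * ((B *ᵥ w) ⬝ᵥ (B *ᵥ w)) := by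
    simp only [sub_dotProduct, dotProduct_sub, smul_dotProduct,
      dotProduct_smul, smul_eq_mul]
    rw [dotProduct_comm (B *ᵥ w) w]
    ring
  rw [expand]
  have hww : w ⬝ᵥ w = 1 := by rw [dot_self_eq, hw]; norm_num
  have hwBw : w ⬝ᵥ (B *ᵥ w) = q := quad_diag X w _
  have hBw : B *ᵥ w = Xᵀ *ᵥ ((Matrix.diagonal (fun i => dd i ^ 2)) *ᵥ (X *ᵥ w)) := by
    rw [hB, ← Matrix.mulVec_mulVec, ← Matrix.mulVec_mulVec]
  have hvv : ((Matrix.diagonal (fun i => dd i ^ 2)) *ᵥ (X *ᵥ w)) ⬝ᵥ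
      ((Matrix.diagonal (fun i => dd i ^ 2)) *ᵥ (X *ᵥ w)) ≤ τ^2 * q := by
    rw [dotProduct, hq, Finset.mul_sum]
    refine Finset.sum_le_sum fun i _ => ?_
    rw [Matrix.mulVec_diagonal]
    have h1 : dd i ^ 2 ≤ τ ^ 2 := by
      have := hdd i; nlinarith [abs_nonneg (dd i), sq_abs (dd i)]
    have h2 := mul_le_mul_of_nonneg_right h1
      (show (0:ℝ) ≤ dd i ^ 2 * ((X *ᵥ w) i) ^ 2 by positivity)
    nlinarith [h2]
  have hBB : (B *ᵥ w) ⬝ᵥ (B *ᵥ w) ≤ S * (τ^2 * q) := by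
    rw [hBw]
    refine (transpose_mulVec_sq_le X _ ⟨w, hw⟩).trans ?_
    exact mul_le_mul_of_nonneg_left hvv hS0
  rw [hww, hwBw]
  nlinarith [sq_nonneg α, hBB]

lemma entry_le_specNorm {k : ℕ} (dd : Fin k → ℝ) (i : Fin k) :
    |dd i| ≤ specNorm (Matrix.diagonal dd) := by
  have hunit : l2norm (Pi.single i 1 : Fin k → ℝ) = 1 := by
    rw [l2norm]
    have h1 : ∑ j, ((Pi.single i 1 : Fin k → ℝ) j)^2 = 1 := by
      rw [Finset.sum_eq_single i]
      · simp
      · intro b _ hb; simp [Pi.single_apply, hb]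
      · intro h; exact absurd (Finset.mem_univ i) h
    rw [h1, Real.sqrt_one]
  have h := le_specNorm_of_unit (Matrix.diagonal dd) _ hunit
  refine le_trans ?_ h
  have heq : Matrix.diagonal dd *ᵥ Pi.single i 1 = Pi.single i (dd i) := by
    funext k'
    rw [Matrix.mulVec_single]
    rcases eq_or_ne k' i with rfl | hne
    · simp [Matrix.diagonal_apply_eq]
    · simp [Matrix.diagonal_apply_ne _ hne, Pi.single_apply, hne]
  rw [heq, l2norm]
  have h2 : ∑ j, (Pi.single i (dd i) j)^2 = (dd i)^2 := by
    rw [Finset.sum_eq_single i]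
    · simp
    · intro b _ hb; simp [Pi.single_apply, hb]
    · intro h; exact absurd (Finset.mem_univ i) h
  rw [h2, Real.sqrt_sq_eq_abs]

lemma f_explicit {n d : ℕ} (X : Matrix (Fin n) (Fin d) ℝ) (w : Fin d → ℝ)
    (hw : l2norm w = 1) (α : ℝ) (dd : Fin n → ℝ) :
    (l2norm (((1 : Matrix (Fin d) (Fin d) ℝ)
        - α • (Xᵀ * Matrix.diagonal (fun i => dd i ^ 2) * X)) *ᵥ w)) ^ 2
      = 1 - 2*α*(∑ i, dd i ^ 2 * ((X *ᵥ w) i) ^ 2)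
        + α^2 * (∑ j, (∑ i, X i j * (dd i ^ 2 * (X *ᵥ w) i))^2) := by
  set B := Xᵀ * Matrix.diagonal (fun i => dd i ^ 2) * X with hB
  have hz : ((1 : Matrix (Fin d) (Fin d) ℝ) - α • B) *ᵥ w = w - α • (B *ᵥ w) := by
    rw [Matrix.sub_mulVec, Matrix.one_mulVec, Matrix.smul_mulVec]
  rw [hz, ← dot_self_eq]
  have expand : (w - α • (B *ᵥ w)) ⬝ᵥ (w - α • (B *ᵥ w))
      = w ⬝ᵥ w - 2*α*(w ⬝ᵥ (B *ᵥ w)) + α^2 * ((B *ᵥ w) ⬝ᵥ (B *ᵥ w)) := by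
    simp only [sub_dotProduct, dotProduct_sub, smul_dotProduct,
      dotProduct_smul, smul_eq_mul]
    rw [dotProduct_comm (B *ᵥ w) w]
    ring
  rw [expand]
  have hww : w ⬝ᵥ w = 1 := by rw [dot_self_eq, hw]; norm_num
  have hwBw : w ⬝ᵥ (B *ᵥ w) = ∑ i, dd i ^ 2 * ((X *ᵥ w) i) ^ 2 := quad_diag X w _
  have hBBeq : (B *ᵥ w) ⬝ᵥ (B *ᵥ w) = ∑ j, (∑ i, X i j * (dd i ^ 2 * (X *ᵥ w) i))^2 := by
    have hBw : B *ᵥ w = Xᵀ *ᵥ ((Matrix.diagonal (fun i => dd i ^ 2)) *ᵥ (X *ᵥ w)) := by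
      rw [hB, ← Matrix.mulVec_mulVec, ← Matrix.mulVec_mulVec]
    rw [hBw, dotProduct]
    refine Finset.sum_congr rfl fun j _ => ?_
    have hcomp : (Xᵀ *ᵥ ((Matrix.diagonal (fun i => dd i ^ 2)) *ᵥ (X *ᵥ w))) j
        = ∑ i, X i j * (dd i ^ 2 * (X *ᵥ w) i) := by
      rw [Matrix.mulVec, dotProduct]
      refine Finset.sum_congr rfl fun i _ => ?_
      rw [Matrix.transpose_apply, Matrix.mulVec_diagonal]
    rw [hcomp]; ring
  rw [hww, hwBw, hBBeq]

end Helpers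

section DotSumHelpers

lemma dot_sum {k : ℕ} {ι : Type*} (s : Finset ι) (v : Fin k → ℝ) (f : ι → (Fin k → ℝ)) :
    v ⬝ᵥ (∑ j ∈ s, f j) = ∑ j ∈ s, v ⬝ᵥ f j := by
  simp only [dotProduct, Finset.sum_apply, Finset.mul_sum]
  exact Finset.sum_comm

lemma l2norm_coe {k : ℕ} (x : EuclideanSpace ℝ (Fin k)) :
    l2norm (WithLp.equiv 2 _ x) = ‖x‖ := by
  rw [EuclideanSpace.norm_eq, l2norm]
  congr 1
  refine Finset.sum_congr rfl fun i _ => ?_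
  rw [Real.norm_eq_abs, sq_abs]
  rfl

lemma inner_eq_dot {k : ℕ} (x y : EuclideanSpace ℝ (Fin k)) :
    (inner ℝ x y : ℝ) = (WithLp.equiv 2 _ x) ⬝ᵥ (WithLp.equiv 2 _ y) := by
  rw [PiLp.inner_apply]
  refine Finset.sum_congr rfl fun i _ => ?_
  simp only [RCLike.inner_apply, conj_trivial, WithLp.equiv_apply]; ring

lemma S_herm {n d : ℕ} (X : Matrix (Fin n) (Fin d) ℝ) (m : Fin n → ℝ) :
    (Xᵀ * Matrix.diagonal m * X).IsHermitian := by
  have h1 : (Matrix.diagonal m).IsHermitian := Matrix.isHermitian_diagonal m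
  have := Matrix.isHermitian_conjTranspose_mul_mul X h1
  simpa [Matrix.conjTranspose_eq_transpose_of_trivial] using this

end DotSumHelpers

section Eigen
variable {d : ℕ} {A : Matrix (Fin d) (Fin d) ℝ}

def uvec (hA : A.IsHermitian) (i : Fin d) : Fin d → ℝ :=
  WithLp.equiv 2 _ (hA.eigenvectorBasis i)

lemma uvec_mul (hA : A.IsHermitian) (i : Fin d) :
    A *ᵥ uvec hA i = hA.eigenvalues i • uvec hA i :=
  hA.mulVec_eigenvectorBasis i

lemma uvec_dot (hA : A.IsHermitian) (i j : Fin d) :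
    uvec hA i ⬝ᵥ uvec hA j = if i = j then 1 else 0 := by
  have h := hA.eigenvectorBasis.orthonormal
  rw [orthonormal_iff_ite] at h
  have := h i j
  rw [inner_eq_dot] at this
  simpa [uvec] using this

lemma uvec_l2 (hA : A.IsHermitian) (i : Fin d) : l2norm (uvec hA i) = 1 := by
  rw [uvec, l2norm_coe]
  exact hA.eigenvectorBasis.orthonormal.1 i

lemma uvec_ne (hA : A.IsHermitian) (i : Fin d) : uvec hA i ≠ 0 := by
  intro h
  have := uvec_l2 hA i
  rw [h] at this
  simp [l2norm] at this

lemma decomp (hA : A.IsHermitian) (v : Fin d → ℝ) :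
    v = ∑ i, (uvec hA i ⬝ᵥ v) • uvec hA i := by
  have h := hA.eigenvectorBasis.sum_repr ((WithLp.equiv 2 _).symm v)
  have h2 : ∀ i, hA.eigenvectorBasis.repr ((WithLp.equiv 2 _).symm v) i = uvec hA i ⬝ᵥ v :=
    fun i => by rw [OrthonormalBasis.repr_apply_apply, inner_eq_dot]; rfl
  calc v = WithLp.equiv 2 _ ((WithLp.equiv 2 _).symm v) := rfl
  _ = ∑ i, (uvec hA i ⬝ᵥ v) • uvec hA i := by
      conv_lhs => rw [← h]
      simp only [← h2]
      simp [uvec, WithLp.ofLp_sum, WithLp.ofLp_smul]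

lemma extract (hA : A.IsHermitian) (a : Fin d → ℝ) (j : Fin d) :
    uvec hA j ⬝ᵥ (∑ i, a i • uvec hA i) = a j := by
  rw [dot_sum]
  have : ∀ i, uvec hA j ⬝ᵥ (a i • uvec hA i) = a i * (if j = i then 1 else 0) := fun i => by
    rw [dotProduct_smul, uvec_dot]; rfl
  simp only [this]
  simp

lemma sumsq (hA : A.IsHermitian) (v : Fin d → ℝ) :
    ∑ i, (uvec hA i ⬝ᵥ v) ^ 2 = l2norm v ^ 2 := by
  have h2 : ∀ i, hA.eigenvectorBasis.repr ((WithLp.equiv 2 _).symm v) i = uvec hA i ⬝ᵥ v :=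
    fun i => by rw [OrthonormalBasis.repr_apply_apply, inner_eq_dot]; rfl
  have hn : ‖hA.eigenvectorBasis.repr ((WithLp.equiv 2 _).symm v)‖
      = ‖(WithLp.equiv 2 ((i : Fin d) → ℝ)).symm v‖ :=
    hA.eigenvectorBasis.repr.norm_map _
  have h3 : l2norm v = ‖(WithLp.equiv 2 ((i : Fin d) → ℝ)).symm v‖ :=
    by rw [← l2norm_coe ((WithLp.equiv 2 ((i : Fin d) → ℝ)).symm v), Equiv.apply_symm_apply]
  rw [h3, ← hn, EuclideanSpace.norm_eq, Real.sq_sqrt (by positivity)]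
  refine Finset.sum_congr rfl fun i _ => ?_
  rw [← h2 i, Real.norm_eq_abs, sq_abs]

lemma mulVec_sum' {n : ℕ} {ι : Type*} (s : Finset ι) (M : Matrix (Fin n) (Fin d) ℝ)
    (f : ι → (Fin d → ℝ)) : M *ᵥ (∑ j ∈ s, f j) = ∑ j ∈ s, M *ᵥ f j := by
  simp only [← Matrix.mulVecLin_apply, map_sum]

end Eigen

section SpectralMain
variable {n d : ℕ} (X : Matrix (Fin n) (Fin d) ℝ) (m : Fin n → ℝ)

lemma eig_quad (i : Fin d) :
    (S_herm X m).eigenvalues i = ∑ j, m j * ((X *ᵥ uvec (S_herm X m) i) j) ^ 2 := by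
  have h2 := quad_diag X (uvec (S_herm X m) i) m
  rw [uvec_mul (S_herm X m) i, dotProduct_smul] at h2
  have h3 : uvec (S_herm X m) i ⬝ᵥ uvec (S_herm X m) i = 1 := by
    rw [uvec_dot]; simp
  rw [h3, smul_eq_mul, mul_one] at h2
  exact h2

lemma eig_nonneg (hm : ∀ i, 0 ≤ m i) (i : Fin d) : 0 ≤ (S_herm X m).eigenvalues i := by
  rw [eig_quad X m i]
  exact Finset.sum_nonneg fun j _ => mul_nonneg (hm j) (sq_nonneg _)

lemma eig_zero_ker (hm : ∀ i, 0 < m i) (i : Fin d)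
    (h0 : (S_herm X m).eigenvalues i = 0) : X *ᵥ uvec (S_herm X m) i = 0 := by
  have h2 := (eig_quad X m i).symm
  rw [h0] at h2
  funext j
  have hterm := (Finset.sum_eq_zero_iff_of_nonneg
      (fun j _ => mul_nonneg (hm j).le (sq_nonneg ((X *ᵥ uvec (S_herm X m) i) j)))).1 h2 j
      (Finset.mem_univ j)
  have := mul_eq_zero.1 hterm
  rcases this with h | h
  · exact absurd h (hm j).ne'
  · simpa using (pow_eq_zero_iff two_ne_zero).1 h

lemma S_transpose : (Xᵀ * Matrix.diagonal m * X)ᵀ = Xᵀ * Matrix.diagonal m * X := by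
  rw [← Matrix.conjTranspose_eq_transpose_of_trivial]
  exact S_herm X m

lemma eig_mem_T (i : Fin d) (hpos : 0 < (S_herm X m).eigenvalues i) :
    (S_herm X m).eigenvalues i ∈ {s : ℝ | 0 < s ∧ ∃ v : Fin d → ℝ, v ≠ 0 ∧
      ((Xᵀ * Matrix.diagonal m * X)ᵀ * (Xᵀ * Matrix.diagonal m * X)) *ᵥ v = (s ^ 2) • v} := by
  refine ⟨hpos, uvec (S_herm X m) i, uvec_ne _ i, ?_⟩
  rw [S_transpose, ← Matrix.mulVec_mulVec, uvec_mul, Matrix.mulVec_smul, uvec_mul,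
    smul_smul, ← sq]

lemma mulVec_decomp (w : Fin d → ℝ) :
    (Xᵀ * Matrix.diagonal m * X) *ᵥ w
      = ∑ i, ((S_herm X m).eigenvalues i * (uvec (S_herm X m) i ⬝ᵥ w)) • uvec (S_herm X m) i := by
  conv_lhs => rw [decomp (S_herm X m) w]
  rw [mulVec_sum']
  refine Finset.sum_congr rfl fun i _ => ?_
  rw [Matrix.mulVec_smul, uvec_mul, smul_smul, mul_comm]

lemma quad_expand (w : Fin d → ℝ) :
    w ⬝ᵥ ((Xᵀ * Matrix.diagonal m * X) *ᵥ w)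
      = ∑ i, (S_herm X m).eigenvalues i * (uvec (S_herm X m) i ⬝ᵥ w) ^ 2 := by
  rw [mulVec_decomp, dot_sum]
  refine Finset.sum_congr rfl fun i _ => ?_
  rw [dotProduct_smul, smul_eq_mul, dotProduct_comm]
  ring

lemma sigma_le (hm : ∀ i, 0 < m i) (w : Fin d → ℝ) (hw : l2norm w = 1)
    (hperp : perpKer X w) :
    sigmaMinPos (Xᵀ * Matrix.diagonal m * X) ≤ w ⬝ᵥ ((Xᵀ * Matrix.diagonal m * X) *ᵥ w) := by
  set hS := S_herm X m with hSdef
  set T := {s : ℝ | 0 < s ∧ ∃ v : Fin d → ℝ, v ≠ 0 ∧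
      ((Xᵀ * Matrix.diagonal m * X)ᵀ * (Xᵀ * Matrix.diagonal m * X)) *ᵥ v = (s ^ 2) • v} with hT
  have hbdd : BddBelow T := ⟨0, fun s hs => hs.1.le⟩
  have hsig : sigmaMinPos (Xᵀ * Matrix.diagonal m * X) = sInf T := rfl
  rw [hsig, quad_expand]
  have hsumsq : ∑ i, (uvec hS i ⬝ᵥ w) ^ 2 = 1 := by
    rw [sumsq hS w, hw]; norm_num
  calc sInf T = ∑ i, sInf T * (uvec hS i ⬝ᵥ w) ^ 2 := by
        rw [← Finset.mul_sum, hsumsq, mul_one]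
  _ ≤ ∑ i, hS.eigenvalues i * (uvec hS i ⬝ᵥ w) ^ 2 := by
      refine Finset.sum_le_sum fun i _ => ?_
      rcases eq_or_ne (uvec hS i ⬝ᵥ w) 0 with h0 | h0
      · rw [h0]; simp
      · refine mul_le_mul_of_nonneg_right ?_ (sq_nonneg _)
        have hlpos : 0 < hS.eigenvalues i := by
          rcases (eig_nonneg X m (fun j => (hm j).le) i).lt_or_eq with h | h
          · exact h
          · exfalso
            have hker := eig_zero_ker X m hm i h.symm
            have := hperp (uvec hS i) hker
            rw [dotProduct_comm] at this
            exact h0 this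
        exact csInf_le hbdd (eig_mem_T X m i hlpos)

lemma sigma_pos (hX : X ≠ 0) (hm : ∀ i, 0 < m i) :
    0 < sigmaMinPos (Xᵀ * Matrix.diagonal m * X) := by
  set hS := S_herm X m with hSdef
  set T := {s : ℝ | 0 < s ∧ ∃ v : Fin d → ℝ, v ≠ 0 ∧
      ((Xᵀ * Matrix.diagonal m * X)ᵀ * (Xᵀ * Matrix.diagonal m * X)) *ᵥ v = (s ^ 2) • v} with hT
  have hsig : sigmaMinPos (Xᵀ * Matrix.diagonal m * X) = sInf T := rfl
  have hsub : T ⊆ Set.range hS.eigenvalues := by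
    rintro s ⟨hs, v, hv, heq⟩
    rw [S_transpose, ← Matrix.mulVec_mulVec] at heq
    have hcoef : ∀ j, hS.eigenvalues j ^ 2 * (uvec hS j ⬝ᵥ v) = s ^ 2 * (uvec hS j ⬝ᵥ v) := by
      intro j
      have hv2 : (Xᵀ * Matrix.diagonal m * X) *ᵥ ((Xᵀ * Matrix.diagonal m * X) *ᵥ v)
          = ∑ i, (hS.eigenvalues i ^ 2 * (uvec hS i ⬝ᵥ v)) • uvec hS i := by
        rw [mulVec_decomp]
        refine Finset.sum_congr rfl fun i _ => ?_
        have hdt : uvec hS i ⬝ᵥ ((Xᵀ * Matrix.diagonal m * X) *ᵥ v)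
            = hS.eigenvalues i * (uvec hS i ⬝ᵥ v) := by
          rw [← dot_transpose (Xᵀ * Matrix.diagonal m * X) (uvec hS i) v, S_transpose,
            uvec_mul, smul_dotProduct, smul_eq_mul]
        rw [hdt]
        congr 1
        ring
      have hrhs : (s ^ 2) • v = ∑ i, (s ^ 2 * (uvec hS i ⬝ᵥ v)) • uvec hS i := by
        conv_lhs => rw [decomp hS v]
        rw [Finset.smul_sum]
        refine Finset.sum_congr rfl fun i _ => ?_
        rw [smul_smul]
      have := heq
      rw [hv2, hrhs] at this
      have h1 := congrArg (fun z => uvec hS j ⬝ᵥ z) this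
      simpa [extract] using h1
    obtain ⟨j, hj⟩ : ∃ j, uvec hS j ⬝ᵥ v ≠ 0 := by
      by_contra hcon
      push_neg at hcon
      apply hv
      rw [decomp hS v]
      refine Finset.sum_eq_zero fun i _ => by rw [hcon i, zero_smul]
    have hsq : hS.eigenvalues j ^ 2 = s ^ 2 := mul_right_cancel₀ hj (hcoef j)
    have habs : |hS.eigenvalues j| = |s| := by
      rw [← Real.sqrt_sq_eq_abs, ← Real.sqrt_sq_eq_abs, hsq]
    rw [abs_of_nonneg (eig_nonneg X m (fun j => (hm j).le) j), abs_of_pos hs] at habs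
    exact ⟨j, habs⟩
  have hfin : T.Finite := (Set.finite_range hS.eigenvalues).subset hsub
  have hne : ∃ i, 0 < hS.eigenvalues i := by
    by_contra hcon
    push_neg at hcon
    apply hX
    have hzero : ∀ i, X *ᵥ uvec hS i = 0 := fun i =>
      eig_zero_ker X m hm i (le_antisymm (hcon i) (eig_nonneg X m (fun j => (hm j).le) i))
    have hall : ∀ v : Fin d → ℝ, X *ᵥ v = 0 := by
      intro v
      rw [decomp hS v, mulVec_sum']
      refine Finset.sum_eq_zero fun i _ => ?_
      rw [Matrix.mulVec_smul, hzero i, smul_zero]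
    ext i j
    have := congrFun (hall (Pi.single j 1)) i
    rw [Matrix.mulVec_single] at this
    simpa using this
  obtain ⟨i, hi⟩ := hne
  have hTne : T.Nonempty := ⟨hS.eigenvalues i, eig_mem_T X m i hi⟩
  have := hTne.csInf_mem hfin
  rw [hsig]
  exact this.1

end SpectralMain

/-- key contraction estimate for GMC.
If `‖D‖ ≤ τ` almost surely, `M₂ = E[D²]` is non-singular, and
`α τ² ‖𝕏‖ < 2`, then for every unit vector `w ⊥ ker X`,
`E[‖(I - α XᵀD²X) w‖₂²] ≤ 1 - α(2 - ατ²‖𝕏‖) σ⁺min(𝕏̂) < 1`. -/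
theorem randomly_weighted_gd_stmt13 {n d : ℕ}
    {Ω : Type*} [MeasurableSpace Ω] (μ : Measure Ω) [IsProbabilityMeasure μ]
    (X : Matrix (Fin n) (Fin d) ℝ) (hX : X ≠ 0)
    (D : Ω → Fin n → ℝ) (hmeas : Measurable D)
    (τ : ℝ) (hτ : ∀ᵐ ω ∂μ, specNorm (Matrix.diagonal (D ω)) ≤ τ)
    (M2 : Matrix (Fin n) (Fin n) ℝ)
    (hM2 : M2 = Matrix.diagonal fun i => ∫ ω, (D ω i) ^ 2 ∂μ)
    (hM2unit : IsUnit M2.det)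
    (α : ℝ) (hα0 : 0 < α)
    (hα : α * τ ^ 2 * specNorm (Xᵀ * X) < 2) :
    (∀ w : Fin d → ℝ, l2norm w = 1 → perpKer X w →
      ∫ ω, (l2norm (((1 : Matrix (Fin d) (Fin d) ℝ)
          - α • (Xᵀ * Matrix.diagonal (fun i => (D ω i) ^ 2) * X)) *ᵥ w)) ^ 2 ∂μ
        ≤ 1 - α * (2 - α * τ ^ 2 * specNorm (Xᵀ * X)) * sigmaMinPos (Xᵀ * M2 * X))
    ∧ 1 - α * (2 - α * τ ^ 2 * specNorm (Xᵀ * X)) * sigmaMinPos (Xᵀ * M2 * X) < 1 := by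
  have hc : 0 < α * (2 - α * τ ^ 2 * specNorm (Xᵀ * X)) := mul_pos hα0 (by linarith)
  -- the diagonal entries of M2 are positive
  set mfun : Fin n → ℝ := fun i => ∫ ω, (D ω i) ^ 2 ∂μ with hmfun
  have hM2' : M2 = Matrix.diagonal mfun := hM2
  have hm_nonneg : ∀ i, 0 ≤ mfun i := fun i => integral_nonneg fun ω => sq_nonneg _
  have hdet : M2.det ≠ 0 := hM2unit.ne_zero
  have hprod : ∏ i, mfun i ≠ 0 := by
    rw [hM2', Matrix.det_diagonal] at hdet
    exact hdet
  have hm_pos : ∀ i, 0 < mfun i := fun i =>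
    (hm_nonneg i).lt_of_ne' (Finset.prod_ne_zero_iff.1 hprod i (Finset.mem_univ i))
  -- almost-sure bound on the entries of D
  have hτ' : ∀ᵐ ω ∂μ, ∀ i, |D ω i| ≤ τ := by
    filter_upwards [hτ] with ω hω i
    exact (entry_le_specNorm (D ω) i).trans hω
  have hσpos : 0 < sigmaMinPos (Xᵀ * M2 * X) := by
    rw [hM2']; exact sigma_pos X mfun hX hm_pos
  constructor
  · intro w hw hperp
    have hDim : ∀ i, Measurable fun ω => D ω i := fun i => (measurable_pi_apply i).comp hmeas
    set c := α * (2 - α * τ ^ 2 * specNorm (Xᵀ * X)) with hcdef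
    set q : Ω → ℝ := fun ω => ∑ i, (D ω i)^2 * ((X *ᵥ w) i)^2 with hqdef
    have hq_meas : Measurable q :=
      Finset.measurable_sum _ fun i _ => ((hDim i).pow_const 2).mul_const _
    have hq_nonneg : ∀ ω, 0 ≤ q ω := fun ω => Finset.sum_nonneg fun i _ => by positivity
    have hDi2_int : ∀ i : Fin n, Integrable (fun ω => (D ω i)^2 * ((X *ᵥ w) i)^2) μ := by
      intro i
      refine Integrable.mono' (integrable_const (τ^2 * ((X *ᵥ w) i)^2))
        (((hDim i).pow_const 2).mul_const _).aestronglyMeasurable ?_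
      filter_upwards [hτ'] with ω hω
      rw [Real.norm_eq_abs, abs_of_nonneg (by positivity)]
      have h1 : (D ω i)^2 ≤ τ^2 := by nlinarith [hω i, abs_nonneg (D ω i), sq_abs (D ω i)]
      exact mul_le_mul_of_nonneg_right h1 (sq_nonneg _)
    have hq_int : Integrable q μ := by
      rw [hqdef]
      exact integrable_finset_sum _ fun i _ => hDi2_int i
    set r : Ω → ℝ := fun ω => ∑ j, (∑ i, X i j * ((D ω i)^2 * (X *ᵥ w) i))^2 with hrdef
    have hr_meas : Measurable r := Finset.measurable_sum _ fun j _ =>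
      (Finset.measurable_sum _ fun i _ =>
        measurable_const.mul (((hDim i).pow_const 2).mul_const _)).pow_const 2
    set f : Ω → ℝ := fun ω => (l2norm (((1 : Matrix (Fin d) (Fin d) ℝ)
          - α • (Xᵀ * Matrix.diagonal (fun i => (D ω i) ^ 2) * X)) *ᵥ w)) ^ 2 with hfdef
    have hf_eq : ∀ ω, f ω = 1 - 2*α*(q ω) + α^2 * (r ω) := fun ω => f_explicit X w hw α (D ω)
    have hf_meas : Measurable f := by
      rw [show f = fun ω => 1 - 2*α*(q ω) + α^2 * (r ω) from funext hf_eq]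
      exact (measurable_const.sub (measurable_const.mul hq_meas)).add
        (measurable_const.mul hr_meas)
    have hf_bound : ∀ᵐ ω ∂μ, f ω ≤ 1 - c * q ω := by
      filter_upwards [hτ'] with ω hω
      exact pointwise_bound X w hw τ α (D ω) hω
    have hf_nonneg : ∀ ω, 0 ≤ f ω := fun ω => sq_nonneg _
    have hg_int : Integrable (fun ω => 1 - c * q ω) μ :=
      (integrable_const 1).sub (hq_int.const_mul c)
    have hf_int : Integrable f μ := by
      refine Integrable.mono' (integrable_const 1) hf_meas.aestronglyMeasurable ?_
      filter_upwards [hf_bound] with ω hω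
      rw [Real.norm_eq_abs, abs_of_nonneg (hf_nonneg ω)]
      have hq0 := hq_nonneg ω
      nlinarith [hc]
    have hint_q : ∫ ω, q ω ∂μ = ∑ i, mfun i * ((X *ᵥ w) i)^2 := by
      rw [hqdef, integral_finset_sum _ fun i _ => hDi2_int i]
      refine Finset.sum_congr rfl fun i _ => ?_
      rw [integral_mul_const]
    have hle : sigmaMinPos (Xᵀ * M2 * X) ≤ ∫ ω, q ω ∂μ := by
      rw [hint_q, hM2']
      have h := sigma_le X mfun hm_pos w hw hperp
      rwa [quad_diag] at h
    calc ∫ ω, f ω ∂μ ≤ ∫ ω, (1 - c * q ω) ∂μ := integral_mono_ae hf_int hg_int hf_bound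
    _ = 1 - c * ∫ ω, q ω ∂μ := by
        rw [integral_sub (integrable_const 1) (hq_int.const_mul c), integral_const,
          integral_const_mul]
        simp
    _ ≤ 1 - c * sigmaMinPos (Xᵀ * M2 * X) := by nlinarith [hc, hle]
  · nlinarith [hσpos, hc]
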